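/- Let A be a bounded normal operator on a complex Hilbert space and X a bounded operator commuting with A. Then X commutes with A*, and writing X = Re X + i·Im X with Re X = (X+X*)/2 and Im X = (X-X*)/(2i), both Re X and Im X commute with A. -/

import Mathlib

open NormedSpace Bornology Set

theorem fuglede_abs {B : Type*} [NormedRing B] [StarRing B] [CStarRing B]
    [NormedAlgebra ℂ B] [CompleteSpace B] [StarModule ℂ B]
    (A X : B) (hA : A * star A = star A * A) (hAX : A * X = X * A) :
    star A * X = X * star A := by
  rcases subsingleton_or_nontrivial B with hs | hs
  · exact Subsingleton.elim _ _
  letI : NormedAlgebra ℚ B := .restrictScalars ℚ ℂ B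
  have hcAX : Commute A X := hAX
  have hcAA : Commute A (star A) := hA
  set f : ℂ → B := fun z => exp (z • star A) * X * exp (-(z • star A)) with hf
  have hdiff : Differentiable ℂ f := by
    have h1 : Differentiable ℂ fun z : ℂ => exp (z • star A) :=
      fun z => (hasDerivAt_exp_smul_const (star A) z).differentiableAt
    have h2 : Differentiable ℂ fun z : ℂ => exp (-(z • star A)) := by
      have e : ∀ z : ℂ, -(z • star A) = z • (-star A) := fun z => (smul_neg z _).symm
      simp only [e]
      exact fun z => (hasDerivAt_exp_smul_const (-star A) z).differentiableAt
    exact (h1.mul (differentiable_const X)).mul h2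
  have hbound : ∀ z : ℂ, ‖f z‖ ≤ ‖X‖ := by
    intro z
    set c : ℂ := (starRingEnd ℂ) z with hc
    set S : B := z • star A - c • A with hS
    have hSstar : star S = -S := by
      simp [hS, star_smul, hc, sub_eq_add_neg, add_comm]
    have hU : exp S ∈ unitary B :=
      exp_mem_unitary_of_mem_skewAdjoint (skewAdjoint.mem_iff.mpr hSstar)
    have hnormU : ‖exp S‖ = 1 := CStarRing.norm_of_mem_unitary hU
    have hXc : Commute (exp (c • A)) X := ((hcAX.smul_left c)).exp_left
    have hXc' : Commute (exp (-(c • A))) X := ((hcAX.smul_left c).neg_left).exp_left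
    have hcomm2 : Commute (z • star A) (-(c • A)) :=
      ((hcAA.symm.smul_left z).smul_right c).neg_right
    have e1 : exp (z • star A) * exp (-(c • A)) = exp S := by
      rw [← exp_add_of_commute hcomm2]; congr 1; rw [hS, sub_eq_add_neg]
    have e2 : exp (c • A) * exp (-(z • star A)) = star (exp S) := by
      rw [star_exp, hSstar, ← exp_add_of_commute]
      · congr 1; rw [hS]; abel
      · exact (((hcAA.symm.smul_left z).smul_right c).symm).neg_right
    have key : f z = exp S * X * star (exp S) := by
      have hXmid : X = exp (-(c • A)) * X * exp (c • A) := by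
        have h1 : exp (-(c • A)) * exp (c • A) = 1 := by
          rw [← exp_add_of_commute (Commute.refl (c • A)).neg_left, neg_add_cancel, exp_zero]
        calc X = X * (exp (-(c • A)) * exp (c • A)) := by rw [h1, mul_one]
          _ = exp (-(c • A)) * X * exp (c • A) := by
              rw [← mul_assoc, ← hXc'.eq, mul_assoc]
      calc f z = exp (z • star A) * (exp (-(c • A)) * X * exp (c • A))
            * exp (-(z • star A)) := by rw [hf]; dsimp only; rw [← hXmid]
        _ = (exp (z • star A) * exp (-(c • A))) * X
            * (exp (c • A) * exp (-(z • star A))) := by noncomm_ring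
        _ = exp S * X * star (exp S) := by rw [e1, e2]
    calc ‖f z‖ ≤ ‖exp S * X‖ * ‖star (exp S)‖ := by rw [key]; exact norm_mul_le _ _
      _ ≤ ‖exp S‖ * ‖X‖ * ‖star (exp S)‖ :=
          mul_le_mul_of_nonneg_right (norm_mul_le _ _) (norm_nonneg _)
      _ = ‖X‖ := by rw [norm_star, hnormU]; ring
  have hconst : ∀ z : ℂ, f z = f 0 := by
    intro z
    refine hdiff.apply_eq_apply_of_bounded ?_ z 0
    rw [isBounded_iff_forall_norm_le]
    exact ⟨‖X‖, by rintro y ⟨z, rfl⟩; exact hbound z⟩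
  have hf0 : f 0 = X := by simp [hf]
  have hcommexp : ∀ z : ℂ, exp (z • star A) * X = X * exp (z • star A) := by
    intro z
    have h := (hconst z).trans hf0
    have h1 : exp (-(z • star A)) * exp (z • star A) = 1 := by
      rw [← exp_add_of_commute (Commute.refl (z • star A)).neg_left, neg_add_cancel, exp_zero]
    calc exp (z • star A) * X
        = exp (z • star A) * X * (exp (-(z • star A)) * exp (z • star A)) := by
          rw [h1, mul_one]
      _ = f z * exp (z • star A) := by rw [hf]; noncomm_ring
      _ = X * exp (z • star A) := by rw [h]
  -- differentiate at 0
  have hg : HasDerivAt (fun z : ℂ => exp (z • star A) * X) (star A * X) 0 := by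
    have := (hasDerivAt_exp_smul_const' (star A) (0 : ℂ)).mul_const X
    simpa using this
  have hh : HasDerivAt (fun z : ℂ => exp (z • star A) * X) (X * star A) 0 := by
    have := (hasDerivAt_exp_smul_const' (star A) (0 : ℂ)).const_mul X
    simp only [zero_smul, exp_zero, mul_one] at this
    exact this.congr_of_eventuallyEq (Filter.Eventually.of_forall fun z => (hcommexp z))
  exact hg.unique hh

theorem stmt18 {H : Type*} [NormedAddCommGroup H] [InnerProductSpace ℂ H]
    [CompleteSpace H] (A X : H →L[ℂ] H) (hA : A * star A = star A * A)
    (hAX : A * X = X * A) :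
    star A * X = X * star A ∧
      A * ((2 : ℂ)⁻¹ • (X + star X)) = ((2 : ℂ)⁻¹ • (X + star X)) * A ∧
      A * ((2 * Complex.I)⁻¹ • (X - star X)) = ((2 * Complex.I)⁻¹ • (X - star X)) * A := by
  have key : star A * X = X * star A := fuglede_abs A X hA hAX
  have h2 : A * star X = star X * A := by
    have := congrArg star key
    simp only [star_mul, star_star] at this
    exact this.symm
  refine ⟨key, ?_, ?_⟩
  · rw [mul_smul_comm, smul_mul_assoc, mul_add, add_mul, hAX, h2]
  · rw [mul_smul_comm, smul_mul_assoc, mul_sub, sub_mul, hAX, h2]
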